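/- For every real ε > 0 there exists N such that for every integer n ≥ N and every integer ℓ with 1 ≤ ℓ ≤ n - 1, one has |(n · Orb(n,ℓ)) / C(n,ℓ) - 1| < ε (as real numbers). In other words, the normalized orbit count F = n·Orb(n,ℓ)/C(n,ℓ) tends to 1 as n → ∞, uniformly over 1 ≤ ℓ ≤ n - 1. -/

import Mathlib

/-- Rotation of a configuration `v : ZMod n → Bool` by `k`: `(k • v) i = v (i - k)`. -/
def rot (n : ℕ) (k : ZMod n) (v : ZMod n → Bool) : ZMod n → Bool :=
  fun i => v (i - k)

/-- The set of configurations with exactly `ℓ` entries equal to `true`. -/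
def Sconf (n ℓ : ℕ) [NeZero n] : Finset (ZMod n → Bool) :=
  Finset.univ.filter fun v => (Finset.univ.filter fun i => v i = true).card = ℓ

/-- The rotation orbit of a configuration. -/
def orbitOf (n : ℕ) [NeZero n] (v : ZMod n → Bool) : Finset (ZMod n → Bool) :=
  Finset.univ.image fun k : ZMod n => rot n k v

/-- The number of rotation orbits on `Sconf n ℓ`. -/
def Orb (n ℓ : ℕ) [NeZero n] : ℕ := ((Sconf n ℓ).image (orbitOf n)).card

/-- The number of configurations in `Sconf n ℓ` fixed by rotation by `k`. -/
def FixCount (n ℓ : ℕ) [NeZero n] (k : ZMod n) : ℕ :=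
  ((Sconf n ℓ).filter fun v => rot n k v = v).card

open Finset

section Aux
variable {n : ℕ} [NeZero n]

lemma rot_zero (v : ZMod n → Bool) : rot n 0 v = v := by
  funext i; simp [rot]

lemma rot_rot (k k' : ZMod n) (v : ZMod n → Bool) :
    rot n k (rot n k' v) = rot n (k + k') v := by
  funext i; simp [rot, sub_sub]

lemma card_boolfun (α : Type*) [Fintype α] [DecidableEq α] (m : ℕ) :
    ((univ : Finset (α → Bool)).filter
      fun v => (univ.filter fun i => v i = true).card = m).card
      = (Fintype.card α).choose m := by
  rw [← Finset.card_univ, ← Finset.card_powersetCard]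
  apply Finset.card_bij' (fun v _ => univ.filter fun i => v i = true)
    (fun s _ => fun i => decide (i ∈ s))
  case hi =>
    intro v hv
    simp only [mem_filter, mem_univ, true_and] at hv
    simp [Finset.mem_powersetCard, hv]
  case hj =>
    intro s hs
    simp only [Finset.mem_powersetCard] at hs
    simp only [mem_filter, mem_univ, true_and]
    rw [← hs.2]
    congr 1
    ext i
    simp
  case left_inv =>
    intro v hv
    funext i
    cases h : v i <;> simp [h]
  case right_inv =>
    intro s hs
    ext i
    simp

lemma card_Sconf (ℓ : ℕ) : (Sconf n ℓ).card = n.choose ℓ := by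
  rw [Sconf, card_boolfun, ZMod.card]

lemma card_trues_rot (k : ZMod n) (v : ZMod n → Bool) :
    (univ.filter fun i => rot n k v i = true).card
      = (univ.filter fun i => v i = true).card := by
  apply Finset.card_bij' (fun i _ => i - k) (fun j _ => j + k)
  case hi =>
    intro i hi
    simp only [mem_filter, mem_univ, true_and] at hi ⊢
    exact hi
  case hj =>
    intro j hj
    simp only [mem_filter, mem_univ, true_and] at hj ⊢
    simpa [rot]
  case left_inv => intro i _; simp
  case right_inv => intro j _; simp

lemma rot_mem_Sconf {ℓ : ℕ} (k : ZMod n) {v : ZMod n → Bool} (hv : v ∈ Sconf n ℓ) :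
    rot n k v ∈ Sconf n ℓ := by
  simp only [Sconf, mem_filter, mem_univ, true_and] at hv ⊢
  rw [card_trues_rot]; exact hv

end Aux

section Burnside
variable {n : ℕ} [NeZero n]
open Finset

def stab (n : ℕ) [NeZero n] (v : ZMod n → Bool) : Finset (ZMod n) :=
  univ.filter fun k => rot n k v = v

lemma rot_cancel (k : ZMod n) {a b : ZMod n → Bool} (h : rot n k a = rot n k b) : a = b := by
  have := congrArg (rot n (-k)) h
  rwa [rot_rot, rot_rot, neg_add_cancel, rot_zero, rot_zero] at this

lemma orbit_mul_stab (v : ZMod n → Bool) :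
    (orbitOf n v).card * (stab n v).card = n := by
  have hmaps : ∀ k : ZMod n, k ∈ (univ : Finset (ZMod n)) → rot n k v ∈ orbitOf n v :=
    fun k _ => mem_image_of_mem _ (mem_univ k)
  have h := Finset.card_eq_sum_card_fiberwise hmaps
  have hfib : ∀ w ∈ orbitOf n v,
      (univ.filter fun k => rot n k v = w).card = (stab n v).card := by
    intro w hw
    simp only [orbitOf, mem_image, mem_univ, true_and] at hw
    obtain ⟨k₀, hk₀⟩ := hw
    apply Finset.card_bij' (fun k _ => k - k₀) (fun k _ => k + k₀)
    case hi =>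
      intro k hk
      simp only [mem_filter, mem_univ, true_and] at hk ⊢
      unfold stab
      simp only [mem_filter, mem_univ, true_and]
      apply rot_cancel k₀
      rw [rot_rot, add_sub_cancel, hk, hk₀]
    case hj =>
      intro k hk
      simp only [stab, mem_filter, mem_univ, true_and] at hk ⊢
      rw [← hk₀]
      nth_rewrite 2 [← hk]
      rw [rot_rot, add_comm k₀ k]
    case left_inv => intro k _; simp
    case right_inv => intro k _; simp
  rw [Finset.sum_congr rfl hfib, Finset.sum_const, smul_eq_mul] at h
  rw [← h, Finset.card_univ, ZMod.card]

lemma mem_orbitOf_self (v : ZMod n → Bool) : v ∈ orbitOf n v := by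
  simp only [orbitOf, mem_image, mem_univ, true_and]
  exact ⟨0, rot_zero v⟩

lemma orbitOf_eq_of_mem {v w : ZMod n → Bool} (hw : w ∈ orbitOf n v) :
    orbitOf n w = orbitOf n v := by
  simp only [orbitOf, mem_image, mem_univ, true_and] at hw
  obtain ⟨k₀, hk₀⟩ := hw
  ext x
  simp only [orbitOf, mem_image, mem_univ, true_and]
  constructor
  · rintro ⟨k, rfl⟩
    exact ⟨k + k₀, by rw [← hk₀, rot_rot]⟩
  · rintro ⟨k, rfl⟩
    exact ⟨k - k₀, by rw [← hk₀, rot_rot, sub_add_cancel]⟩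

lemma orbit_subset_Sconf {ℓ : ℕ} {v : ZMod n → Bool} (hv : v ∈ Sconf n ℓ) :
    orbitOf n v ⊆ Sconf n ℓ := by
  intro w hw
  simp only [orbitOf, mem_image, mem_univ, true_and] at hw
  obtain ⟨k, rfl⟩ := hw
  exact rot_mem_Sconf k hv

lemma burnside (ℓ : ℕ) : ∑ k : ZMod n, FixCount n ℓ k = n * Orb n ℓ := by
  have h1 : ∑ k : ZMod n, FixCount n ℓ k = ∑ v ∈ Sconf n ℓ, (stab n v).card := by
    unfold FixCount stab
    simp only [Finset.card_filter]
    exact Finset.sum_comm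
  rw [h1]
  have hmaps : ∀ v ∈ Sconf n ℓ, orbitOf n v ∈ (Sconf n ℓ).image (orbitOf n) :=
    fun v hv => mem_image_of_mem _ hv
  rw [← Finset.sum_fiberwise_of_maps_to hmaps (fun v => (stab n v).card)]
  have hO : ∀ O ∈ (Sconf n ℓ).image (orbitOf n),
      ∑ v ∈ (Sconf n ℓ).filter (fun v => orbitOf n v = O), (stab n v).card = n := by
    intro O hO
    simp only [mem_image] at hO
    obtain ⟨v₀, hv₀, rfl⟩ := hO
    have hfilter : (Sconf n ℓ).filter (fun v => orbitOf n v = orbitOf n v₀) = orbitOf n v₀ := by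
      ext w
      simp only [mem_filter]
      constructor
      · rintro ⟨_, hw⟩
        rw [← hw]; exact mem_orbitOf_self w
      · intro hw
        exact ⟨orbit_subset_Sconf hv₀ hw, orbitOf_eq_of_mem hw⟩
    rw [hfilter]
    have hcard : ∀ w ∈ orbitOf n v₀, (stab n w).card = n / (orbitOf n v₀).card := by
      intro w hw
      have h := orbit_mul_stab w
      rw [orbitOf_eq_of_mem hw] at h
      have hpos : 0 < (orbitOf n v₀).card := Finset.card_pos.mpr ⟨w, hw⟩
      exact (Nat.div_eq_of_eq_mul_left hpos (by rw [mul_comm]; exact h.symm)).symm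
    rw [Finset.sum_congr rfl hcard, Finset.sum_const, smul_eq_mul]
    have hdvd : (orbitOf n v₀).card ∣ n := ⟨(stab n v₀).card, (orbit_mul_stab v₀).symm⟩
    exact Nat.mul_div_cancel' hdvd
  rw [Finset.sum_congr rfl hO, Finset.sum_const, smul_eq_mul, Orb, mul_comm]

end Burnside

section Fix
variable {n : ℕ} [NeZero n]
open Finset

lemma rot_nsmul_fixed {k : ZMod n} {v : ZMod n → Bool} (hv : rot n k v = v) (j : ℕ) :
    rot n (j • k) v = v := by
  induction j with
  | zero => simpa using rot_zero v
  | succ j ih => rw [succ_nsmul, ← rot_rot, hv, ih]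

lemma rot_neg_fixed {k : ZMod n} {v : ZMod n → Bool} (hv : rot n k v = v) :
    rot n (-k) v = v := by
  conv_lhs => rw [← hv]
  rw [rot_rot, neg_add_cancel, rot_zero]

lemma rot_zsmul_fixed {k : ZMod n} {v : ZMod n → Bool} (hv : rot n k v = v) (c : ℤ) :
    rot n (c • k) v = v := by
  induction c using Int.induction_on with
  | zero => simpa using rot_zero v
  | succ i ih => rw [add_smul, one_smul, ← rot_rot, hv, ih]
  | pred i ih =>
      rw [sub_smul, one_smul, sub_eq_add_neg, ← rot_rot, rot_neg_fixed hv, ih]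

lemma rot_gcd_fixed {k : ZMod n} {v : ZMod n → Bool} (hv : rot n k v = v) :
    rot n ((Nat.gcd k.val n : ℕ) : ZMod n) v = v := by
  have hbez : ((Nat.gcd k.val n : ℕ) : ZMod n) = (Nat.gcdA k.val n) • k := by
    have h := Nat.gcd_eq_gcd_ab k.val n
    have h2 : (((Nat.gcd k.val n : ℤ)) : ZMod n)
        = (((k.val : ℤ) * Nat.gcdA k.val n + (n : ℤ) * Nat.gcdB k.val n : ℤ) : ZMod n) := by
      exact_mod_cast congrArg (fun z : ℤ => ((z : ZMod n))) h
    push_cast at h2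
    rw [ZMod.natCast_self, zero_mul, add_zero, ZMod.natCast_zmod_val] at h2
    rw [zsmul_eq_mul, mul_comm]
    exact_mod_cast h2
  rw [hbez]
  exact rot_zsmul_fixed hv _

lemma fixed_eval_mod {c : ℕ} {v : ZMod n → Bool} (hd : rot n (c : ZMod n) v = v)
    (i : ZMod n) : v i = v ((i.val % c : ℕ) : ZMod n) := by
  have hfix := rot_nsmul_fixed hd (i.val / c)
  have heq : ((i.val % c : ℕ) : ZMod n) = i - (i.val / c) • ((c : ℕ) : ZMod n) := by
    have h1 : ((i.val % c + i.val / c * c : ℕ) : ZMod n) = i := by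
      rw [Nat.mod_add_div', ZMod.natCast_zmod_val]
    push_cast at h1
    rw [nsmul_eq_mul, eq_sub_iff_add_eq]
    exact_mod_cast h1
  have h2 := congrFun hfix i
  simp only [rot] at h2
  rw [heq]
  exact h2.symm

lemma card_val_mod_fiber {d t : ℕ} (hdt : d * t = n) (hd0 : 0 < d) (r : ℕ) (hr : r < d) :
    (univ.filter fun i : ZMod n => i.val % d = r).card = t := by
  have hc : ((univ : Finset (Fin t))).card = t := by simp
  rw [← hc]
  refine Finset.card_bij'
    (fun i hi => (⟨i.val / d, ?_⟩ : Fin t))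
    (fun j _ => ((r + j.val * d : ℕ) : ZMod n)) ?_ ?_ ?_ ?_
  · exact (Nat.div_lt_iff_lt_mul hd0).mpr (by rw [mul_comm, hdt]; exact i.val_lt)
  · intro i hi; exact mem_univ _
  · intro j _
    simp only [mem_filter, mem_univ, true_and]
    have hlt : r + j.val * d < n := by
      have hj := j.isLt
      calc r + j.val * d < d + j.val * d := by omega
        _ = (j.val + 1) * d := by ring
        _ ≤ t * d := Nat.mul_le_mul_right d (by omega)
        _ = n := by rw [mul_comm]; exact hdt
    rw [ZMod.val_natCast_of_lt hlt, Nat.add_mul_mod_self_right, Nat.mod_eq_of_lt hr]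
  · intro i hi
    simp only [mem_filter, mem_univ, true_and] at hi
    show ((r + i.val / d * d : ℕ) : ZMod n) = i
    rw [← hi, Nat.mod_add_div', ZMod.natCast_zmod_val]
  · intro j _
    have hlt : r + j.val * d < n := by
      have hj := j.isLt
      calc r + j.val * d < d + j.val * d := by omega
        _ = (j.val + 1) * d := by ring
        _ ≤ t * d := Nat.mul_le_mul_right d (by omega)
        _ = n := by rw [mul_comm]; exact hdt
    apply Fin.ext
    simp only
    rw [ZMod.val_natCast_of_lt hlt, Nat.add_mul_div_right _ _ hd0, Nat.div_eq_of_lt hr,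
      zero_add]

lemma trues_eq {d t ℓ : ℕ} {v : ZMod n → Bool} (hv : v ∈ Sconf n ℓ)
    (hd : rot n ((d : ℕ) : ZMod n) v = v) (hdt : d * t = n) (hd0 : 0 < d) :
    ℓ = t * ((univ.filter fun r : Fin d => v ((r.val : ℕ) : ZMod n) = true).card) := by
  simp only [Sconf, mem_filter, mem_univ, true_and] at hv
  have hg : ∀ i : ZMod n, i ∈ univ.filter (fun i => v i = true) →
      (⟨i.val % d, Nat.mod_lt _ hd0⟩ : Fin d) ∈ (univ : Finset (Fin d)) :=
    fun i _ => mem_univ _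
  have h := Finset.card_eq_sum_card_fiberwise hg
  have key : ∀ r : Fin d,
      ((univ.filter fun i : ZMod n => v i = true).filter
        (fun i => (⟨i.val % d, Nat.mod_lt _ hd0⟩ : Fin d) = r)).card
      = if v ((r.val : ℕ) : ZMod n) = true then t else 0 := by
    intro r
    by_cases hvr : v ((r.val : ℕ) : ZMod n) = true
    · rw [if_pos hvr]
      rw [← card_val_mod_fiber hdt hd0 r.val r.isLt]
      congr 1
      ext i
      simp only [filter_filter, mem_filter, mem_univ, true_and, Fin.ext_iff]
      constructor
      · rintro ⟨_, h2⟩; exact h2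
      · intro h2
        refine ⟨?_, h2⟩
        rw [fixed_eval_mod hd i, h2]
        exact hvr
    · rw [if_neg hvr]
      rw [Finset.card_eq_zero]
      ext i
      simp only [filter_filter, mem_filter, mem_univ, true_and, Fin.ext_iff,
        Finset.notMem_empty, iff_false, not_and]
      intro h1 h2
      apply hvr
      rw [← h1, fixed_eval_mod hd i, h2]
    -- done
  rw [← hv, h, Finset.sum_congr rfl (fun r _ => key r)]
  rw [← Finset.sum_filter]
  rw [Finset.sum_const, smul_eq_mul, mul_comm]

end Fix

section Choose
open Finset

lemma choose_pow_le (d m t : ℕ) : d.choose m ^ t ≤ (d * t).choose (m * t) := by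
  induction t with
  | zero => simp
  | succ t ih =>
      rw [pow_succ, Nat.mul_succ, Nat.mul_succ, Nat.add_choose_eq]
      calc d.choose m ^ t * d.choose m ≤ (d * t).choose (m * t) * d.choose m :=
            Nat.mul_le_mul_right _ ih
        _ ≤ ∑ ij ∈ Finset.HasAntidiagonal.antidiagonal (m * t + m), (d * t).choose ij.1 * d.choose ij.2 := by
            exact Finset.single_le_sum
              (f := fun ij : ℕ × ℕ => (d * t).choose ij.1 * d.choose ij.2)
              (fun _ _ => Nat.zero_le _)
              (Finset.HasAntidiagonal.mem_antidiagonal.mpr rfl : (m * t, m) ∈ Finset.HasAntidiagonal.antidiagonal (m * t + m))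

lemma le_choose : ∀ d m : ℕ, 1 ≤ m → m < d → d ≤ d.choose m := by
  intro d
  induction d with
  | zero => intro m h1 h2; omega
  | succ d ih =>
      intro m h1 h2
      obtain ⟨m', rfl⟩ : ∃ m', m = m' + 1 := ⟨m - 1, by omega⟩
      rw [Nat.choose_succ_succ]
      simp only [Nat.succ_eq_add_one]
      rcases Nat.lt_or_ge (m' + 1) d with h | h
      · have h3 := ih (m' + 1) (by omega) h
        have h4 : 1 ≤ d.choose m' := Nat.choose_pos (by omega)
        omega
      · have hmd : d = m' + 1 := by omega
        subst hmd
        rw [Nat.choose_self, Nat.choose_succ_self_right]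

lemma sq_le_pow (t : ℕ) : t ^ 2 ≤ 4 * 2 ^ t := by
  induction t with
  | zero => norm_num
  | succ t ih =>
      have h1 : t < 2 ^ t := Nat.lt_two_pow_self
      have : (t + 1) ^ 2 = t ^ 2 + 2 * t + 1 := by ring
      rw [this, pow_succ 2 t]
      omega

lemma numeric_bound {d t : ℕ} (hd : 2 ≤ d) (ht : 3 ≤ t) : (d * t) ^ 2 ≤ 32 * d ^ (t - 1) := by
  have h1 : (d * t) ^ 2 = d ^ 2 * t ^ 2 := by ring
  have h2 : t ^ 2 ≤ 4 * 2 ^ t := sq_le_pow t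
  have h3 : 2 ^ t = 8 * 2 ^ (t - 3) := by
    have : t = 3 + (t - 3) := by omega
    rw [this, pow_add]; norm_num
  have h4 : 2 ^ (t - 3) ≤ d ^ (t - 3) := Nat.pow_le_pow_left hd _
  have h5 : d ^ (t - 1) = d ^ 2 * d ^ (t - 3) := by
    rw [← pow_add]; congr 1; omega
  calc (d * t) ^ 2 = d ^ 2 * t ^ 2 := h1
    _ ≤ d ^ 2 * (4 * 2 ^ t) := Nat.mul_le_mul_left _ h2
    _ = d ^ 2 * (32 * 2 ^ (t - 3)) := by rw [h3]; ring_nf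
    _ ≤ d ^ 2 * (32 * d ^ (t - 3)) := by
        apply Nat.mul_le_mul_left; apply Nat.mul_le_mul_left; exact h4
    _ = 32 * d ^ (t - 1) := by rw [h5]; ring

end Choose

section Master
variable {n : ℕ} [NeZero n]
open Finset

lemma fix_zero (ℓ : ℕ) : FixCount n ℓ 0 = n.choose ℓ := by
  rw [FixCount, ← card_Sconf (n := n) ℓ]
  congr 1
  apply Finset.filter_true_of_mem
  intro v _
  exact rot_zero v

lemma fix_master {ℓ : ℕ} (hl1 : 1 ≤ ℓ) (hl2 : ℓ ≤ n - 1) {k : ZMod n} (hk : k ≠ 0) :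
    n ^ 2 * FixCount n ℓ k ≤
      32 * n.choose ℓ + (if 2 * k.val = n then 2 * n * n.choose ℓ else 0) := by
  set d := Nat.gcd k.val n with hd_def
  set t := n / d with ht_def
  have hn0 : 0 < n := Nat.pos_of_ne_zero (NeZero.ne n)
  have hkv : k.val ≠ 0 := fun h => hk (by rwa [← ZMod.val_eq_zero])
  have hd0 : 0 < d := Nat.gcd_pos_of_pos_right _ hn0
  have hdvd : d ∣ n := Nat.gcd_dvd_right _ _
  have hdk : d ∣ k.val := Nat.gcd_dvd_left _ _
  have hdlt : d < n := lt_of_le_of_lt (Nat.le_of_dvd (Nat.pos_of_ne_zero hkv) hdk) k.val_lt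
  have hdt : d * t = n := Nat.mul_div_cancel' hdvd
  have ht2 : 2 ≤ t := by
    rcases Nat.lt_or_ge t 2 with h | h
    · interval_cases t <;> omega
    · exact h
  by_cases hfix : FixCount n ℓ k = 0
  · rw [hfix]
    simp only [Nat.mul_zero]
    exact Nat.zero_le _
  -- there is a fixed configuration
  have hpos : (0:ℕ) < ((Sconf n ℓ).filter fun w => rot n k w = w).card :=
    Nat.pos_of_ne_zero hfix
  obtain ⟨v, hv⟩ := Finset.card_pos.mp hpos
  simp only [mem_filter] at hv
  obtain ⟨hvS, hvrot⟩ := hv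
  have hgcd : rot n ((d : ℕ) : ZMod n) v = v := rot_gcd_fixed hvrot
  set m := ((univ.filter fun r : Fin d => v ((r.val : ℕ) : ZMod n) = true)).card with hm_def
  have hml : ℓ = t * m := trues_eq hvS hgcd hdt hd0
  have hm1 : 1 ≤ m := by
    rcases Nat.eq_zero_or_pos m with h | h
    · rw [h, Nat.mul_zero] at hml; omega
    · exact h
  have hmd : m < d := by
    have : t * m < t * d := by
      rw [← hml, mul_comm t d, hdt]; omega
    exact Nat.lt_of_mul_lt_mul_left this
  have hd2 : 2 ≤ d := by omega
  -- FixCount ≤ C(d, m)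
  have hfix_le : FixCount n ℓ k ≤ d.choose m := by
    have htarget : ((univ : Finset (Fin d → Bool)).filter
        fun w => (univ.filter fun r => w r = true).card = m).card = d.choose m := by
      rw [card_boolfun, Fintype.card_fin]
    rw [FixCount, ← htarget]
    apply Finset.card_le_card_of_injOn (fun v' => fun r : Fin d => v' ((r.val : ℕ) : ZMod n))
    · intro v' hv'
      simp only [mem_coe, mem_filter, mem_univ, true_and] at hv' ⊢
      obtain ⟨hv'S, hv'rot⟩ := hv'
      have hml' := trues_eq hv'S (rot_gcd_fixed hv'rot) hdt hd0
      have ht0 : 0 < t := lt_of_lt_of_le (by norm_num) ht2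
      exact Nat.eq_of_mul_eq_mul_left ht0 (hml'.symm.trans hml)
    · intro v₁ h₁ v₂ h₂ heq
      simp only [mem_coe, mem_filter] at h₁ h₂
      funext i
      have e₁ := fixed_eval_mod (c := d) (rot_gcd_fixed h₁.2) i
      have e₂ := fixed_eval_mod (c := d) (rot_gcd_fixed h₂.2) i
      rw [e₁, e₂]
      exact congrFun heq (⟨i.val % d, Nat.mod_lt _ hd0⟩ : Fin d)
  have hpow : d.choose m ^ t ≤ n.choose ℓ := by
    calc d.choose m ^ t ≤ (d * t).choose (m * t) := choose_pow_le d m t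
      _ = n.choose ℓ := by rw [hdt, hml, mul_comm]
  have hdC : d ≤ d.choose m := le_choose d m hm1 hmd
  have hsplit : d.choose m ^ t = d.choose m * d.choose m ^ (t - 1) := by
    conv_lhs => rw [show t = 1 + (t - 1) by omega]
    rw [pow_add, pow_one]
  have key : FixCount n ℓ k * d ^ (t - 1) ≤ n.choose ℓ := by
    calc FixCount n ℓ k * d ^ (t - 1)
        ≤ d.choose m * d.choose m ^ (t - 1) :=
          Nat.mul_le_mul hfix_le (Nat.pow_le_pow_left hdC _)
      _ = d.choose m ^ t := hsplit.symm
      _ ≤ n.choose ℓ := hpow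
  by_cases ht3 : 3 ≤ t
  · have hnum : n ^ 2 ≤ 32 * d ^ (t - 1) := by
      rw [← hdt]; exact numeric_bound hd2 ht3
    calc n ^ 2 * FixCount n ℓ k ≤ 32 * d ^ (t - 1) * FixCount n ℓ k :=
          Nat.mul_le_mul_right _ hnum
      _ = 32 * (FixCount n ℓ k * d ^ (t - 1)) := by ring
      _ ≤ 32 * n.choose ℓ := Nat.mul_le_mul_left _ key
      _ ≤ _ := Nat.le_add_right _ _
  · have ht2' : t = 2 := by omega
    have hn2d : n = d * 2 := by rw [← hdt, ht2']
    have hhalf : 2 * k.val = n := by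
      obtain ⟨c, hc⟩ := hdk
      have hc2 : c < 2 := by
        apply Nat.lt_of_mul_lt_mul_left (a := d)
        calc d * c = k.val := hc.symm
          _ < n := k.val_lt
          _ = d * 2 := hn2d
      rcases c with _ | c
      · exfalso; apply hkv; simpa using hc
      rcases c with _ | c
      · omega
      · omega
    rw [if_pos hhalf]
    have key' : FixCount n ℓ k * d ≤ n.choose ℓ := by
      have hd1 : d ^ (t - 1) = d := by rw [ht2']; norm_num
      rw [← hd1]; exact key
    set F := FixCount n ℓ k with hF_def
    calc n ^ 2 * F = 2 * n * (F * d) := by rw [hn2d]; ring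
      _ ≤ 2 * n * n.choose ℓ := Nat.mul_le_mul_left _ key'
      _ ≤ _ := Nat.le_add_left _ _

lemma sum_fix_bound {ℓ : ℕ} (hl1 : 1 ≤ ℓ) (hl2 : ℓ ≤ n - 1) :
    n * (∑ k ∈ univ.erase (0 : ZMod n), FixCount n ℓ k) ≤ 34 * n.choose ℓ := by
  have hn0 : 0 < n := Nat.pos_of_ne_zero (NeZero.ne n)
  set C := n.choose ℓ with hC_def
  have h1 : ∀ k ∈ univ.erase (0 : ZMod n),
      n ^ 2 * FixCount n ℓ k ≤ 32 * C + (if 2 * k.val = n then 2 * n * C else 0) :=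
    fun k hk => fix_master hl1 hl2 (Finset.mem_erase.mp hk).1
  have h2 : ∑ k ∈ univ.erase (0 : ZMod n), (if 2 * k.val = n then 2 * n * C else 0)
      ≤ 2 * n * C := by
    rw [← Finset.sum_filter]
    have hcard : ((univ.erase (0 : ZMod n)).filter fun k => 2 * k.val = n).card ≤ 1 := by
      apply Finset.card_le_one.mpr
      intro a ha b hb
      simp only [mem_filter] at ha hb
      apply ZMod.val_injective
      omega
    calc ∑ _k ∈ (univ.erase (0 : ZMod n)).filter (fun k => 2 * k.val = n), 2 * n * C
        = ((univ.erase (0 : ZMod n)).filter fun k => 2 * k.val = n).card * (2 * n * C) := by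
          rw [Finset.sum_const, smul_eq_mul]
      _ ≤ 1 * (2 * n * C) := Nat.mul_le_mul_right _ hcard
      _ = 2 * n * C := by ring
  have h3 : n ^ 2 * (∑ k ∈ univ.erase (0 : ZMod n), FixCount n ℓ k)
      ≤ 34 * n * C := by
    rw [Finset.mul_sum]
    calc ∑ k ∈ univ.erase (0 : ZMod n), n ^ 2 * FixCount n ℓ k
        ≤ ∑ k ∈ univ.erase (0 : ZMod n),
            (32 * C + (if 2 * k.val = n then 2 * n * C else 0)) :=
          Finset.sum_le_sum h1
      _ = (univ.erase (0 : ZMod n)).card * (32 * C)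
            + ∑ k ∈ univ.erase (0 : ZMod n), (if 2 * k.val = n then 2 * n * C else 0) := by
          rw [Finset.sum_add_distrib, Finset.sum_const, smul_eq_mul]
      _ ≤ n * (32 * C) + 2 * n * C := by
          apply Nat.add_le_add _ h2
          apply Nat.mul_le_mul_right
          calc (univ.erase (0 : ZMod n)).card ≤ (univ : Finset (ZMod n)).card :=
                Finset.card_le_card (Finset.erase_subset _ _)
            _ = n := by rw [Finset.card_univ, ZMod.card]
      _ = 34 * n * C := by ring
  have := h3
  rw [pow_two, mul_assoc] at this
  rw [show 34 * n * C = n * (34 * C) by ring] at this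
  exact Nat.le_of_mul_le_mul_left this hn0

end Master


/-- Theorem 1 of the paper: the normalized orbit count `n·Orb(n,ℓ)/C(n,ℓ)` tends to 1
as `n → ∞`, uniformly over `1 ≤ ℓ ≤ n - 1`. -/
theorem stmt_0 :
    ∀ ε : ℝ, 0 < ε → ∃ N : ℕ, ∀ (n ℓ : ℕ), N ≤ n → ∀ (h1 : 1 ≤ ℓ) (h2 : ℓ ≤ n - 1),
      haveI : NeZero n := ⟨by omega⟩
      |((n * Orb n ℓ : ℕ) : ℝ) / ((n.choose ℓ : ℕ) : ℝ) - 1| < ε := by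
  intro ε hε
  refine ⟨⌈(34 : ℝ) / ε⌉₊ + 2, fun n ℓ hn h1 h2 => ?_⟩

  haveI : NeZero n := ⟨by omega⟩
  show |((n * Orb n ℓ : ℕ) : ℝ) / ((n.choose ℓ : ℕ) : ℝ) - 1| < ε
  have hn2 : 2 ≤ n := by omega
  have hB := burnside (n := n) ℓ
  have hsplit : ∑ k : ZMod n, FixCount n ℓ k
      = FixCount n ℓ 0 + ∑ k ∈ Finset.univ.erase (0 : ZMod n), FixCount n ℓ k :=
    (Finset.add_sum_erase _ _ (Finset.mem_univ 0)).symm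
  set C := n.choose ℓ with hC_def
  set E := ∑ k ∈ Finset.univ.erase (0 : ZMod n), FixCount n ℓ k with hE_def
  have hOrb : n * Orb n ℓ = C + E := by
    rw [← hB, hsplit, fix_zero]
  have hE : n * E ≤ 34 * C := sum_fix_bound h1 h2
  have hC0 : 0 < C := Nat.choose_pos (by omega)
  have hCpos : (0 : ℝ) < (C : ℝ) := by exact_mod_cast hC0
  have hnpos : (0 : ℝ) < (n : ℝ) := by positivity
  rw [hOrb]
  have hval : (((C + E : ℕ)) : ℝ) / (C : ℝ) - 1 = (E : ℝ) / (C : ℝ) := by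
    push_cast
    field_simp
    ring
  rw [hval, abs_of_nonneg (by positivity)]
  have hle : (E : ℝ) / (C : ℝ) ≤ 34 / (n : ℝ) := by
    rw [div_le_div_iff₀ hCpos hnpos]
    have : (n : ℝ) * (E : ℝ) ≤ 34 * (C : ℝ) := by exact_mod_cast hE
    linarith
  have hlt : (34 : ℝ) / (n : ℝ) < ε := by
    rw [div_lt_iff₀ hnpos]
    have hc : (34 : ℝ) / ε < (n : ℝ) := by
      calc (34 : ℝ) / ε ≤ (⌈(34 : ℝ) / ε⌉₊ : ℝ) := Nat.le_ceil _
        _ < ((⌈(34 : ℝ) / ε⌉₊ + 2 : ℕ) : ℝ) := by push_cast; linarith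
        _ ≤ (n : ℝ) := by exact_mod_cast hn
    calc (34 : ℝ) = (34 / ε) * ε := by field_simp
      _ < (n : ℝ) * ε := mul_lt_mul_of_pos_right hc hε
      _ = ε * (n : ℝ) := mul_comm _ _
  linarith
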